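/- arXiv:1811.04559 — 2 statements merged into one kernel-verified Lean document; each statement's English description precedes it below -/
import Mathlib

section
/- Let Q₈ be the quaternion group of order 8 and D₄ the dihedral group of order 8. Then the lattices of normal subgroups N(Q₈) and N(D₄) are isomorphic as lattices, but there exists no ℰL-isomorphism from Q₈ to D₄. -/
set_option maxRecDepth 100000

/-- An ℰL-isomorphism from a group `G₁` to a group `G₂`: a bijection between the subgroup
lattices which commutes with taking normal cores and preserves the ℰ-lattice meet
`H ∧ K = H_G ∩ K_G` and join `H ∨ K = H_G K_G` (the join of the two normal cores). -/
def IsELIso {G₁ G₂ : Type*} [Group G₁] [Group G₂] (f : Subgroup G₁ → Subgroup G₂) : Prop :=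
  Function.Bijective f ∧
    (∀ H : Subgroup G₁, f H.normalCore = (f H).normalCore) ∧
    (∀ H K : Subgroup G₁,
      f (H.normalCore ⊓ K.normalCore) = (f H).normalCore ⊓ (f K).normalCore) ∧
    (∀ H K : Subgroup G₁,
      f (H.normalCore ⊔ K.normalCore) = (f H).normalCore ⊔ (f K).normalCore)

namespace Q8D4Aux

open QuaternionGroup DihedralGroup

/-- A subgroup from an explicit finset. -/
def sg {G : Type*} [Group G] [DecidableEq G] (F : Finset G)
    (h1 : (1 : G) ∈ F) (hmul : ∀ x ∈ F, ∀ y ∈ F, x * y ∈ F)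
    (hinv : ∀ x ∈ F, x⁻¹ ∈ F) : Subgroup G where
  carrier := ↑F
  one_mem' := h1
  mul_mem' := fun hx hy => hmul _ hx _ hy
  inv_mem' := fun hx => hinv _ hx

lemma mem_sg {G : Type*} [Group G] [DecidableEq G] {F : Finset G}
    {h1 : (1 : G) ∈ F} {hmul : ∀ x ∈ F, ∀ y ∈ F, x * y ∈ F}
    {hinv : ∀ x ∈ F, x⁻¹ ∈ F} {x : G} :
    x ∈ sg F h1 hmul hinv ↔ x ∈ F := Iff.rfl

lemma sg_le_sg_iff {G : Type*} [Group G] [DecidableEq G] {F F' : Finset G}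
    {h1 hmul hinv h1' hmul' hinv'} :
    sg F h1 hmul hinv ≤ sg F' h1' hmul' hinv' ↔ F ⊆ F' := by
  constructor
  · intro h x hx
    exact (mem_sg).mp (h ((mem_sg).mpr hx))
  · intro h x hx
    exact (mem_sg).mpr (h ((mem_sg).mp hx))

/-- Any subgroup's carrier, as a finset, is multiplicatively closed, hence belongs to any
complete list of such finsets. -/
lemma classify {G : Type*} [Group G] [Fintype G] [DecidableEq G] (L : List (Finset G))
    (hL : ∀ F : Finset G,
      ((1 : G) ∈ F ∧ (∀ x ∈ F, ∀ y ∈ F, x * y ∈ F) ∧ (∀ x ∈ F, x⁻¹ ∈ F)) → F ∈ L)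
    (H : Subgroup G) : ∃ F ∈ L, ∀ x, x ∈ H ↔ x ∈ F := by
  classical
  refine ⟨Finset.univ.filter (fun x => x ∈ H), hL _ ⟨?_, ?_, ?_⟩, ?_⟩
  · simp [H.one_mem]
  · intro x hx y hy
    simp only [Finset.mem_filter, Finset.mem_univ, true_and] at *
    exact H.mul_mem hx hy
  · intro x hx
    simp only [Finset.mem_filter, Finset.mem_univ, true_and] at *
    exact H.inv_mem hx
  · intro x; simp

lemma classifyNormal {G : Type*} [Group G] [Fintype G] [DecidableEq G] (L : List (Finset G))
    (hL : ∀ F : Finset G,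
      ((1 : G) ∈ F ∧ (∀ x ∈ F, ∀ y ∈ F, x * y ∈ F) ∧ (∀ x ∈ F, x⁻¹ ∈ F)
        ∧ (∀ x ∈ F, ∀ g, g * x * g⁻¹ ∈ F)) → F ∈ L)
    (H : Subgroup G) (hN : H.Normal) : ∃ F ∈ L, ∀ x, x ∈ H ↔ x ∈ F := by
  classical
  refine ⟨Finset.univ.filter (fun x => x ∈ H), hL _ ⟨?_, ?_, ?_, ?_⟩, ?_⟩
  · simp [H.one_mem]
  · intro x hx y hy
    simp only [Finset.mem_filter, Finset.mem_univ, true_and] at *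
    exact H.mul_mem hx hy
  · intro x hx
    simp only [Finset.mem_filter, Finset.mem_univ, true_and] at *
    exact H.inv_mem hx
  · intro x hx g
    simp only [Finset.mem_filter, Finset.mem_univ, true_and] at *
    exact hN.conj_mem x hx g
  · intro x; simp

abbrev Q8 := QuaternionGroup 2
abbrev D4 := DihedralGroup 4

def QF : Fin 6 → Finset Q8 :=
  ![{a 0}, {a 0, a 2}, {a 0, a 1, a 2, a 3},
    {a 0, a 2, xa 0, xa 2}, {a 0, a 2, xa 1, xa 3}, Finset.univ]

def DF : Fin 6 → Finset D4 :=
  ![{r 0}, {r 0, r 2}, {r 0, r 1, r 2, r 3},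
    {r 0, r 2, sr 0, sr 2}, {r 0, r 2, sr 1, sr 3}, Finset.univ]

lemma hq1 : ∀ i, (1 : Q8) ∈ QF i := by decide
lemma hqmul : ∀ i, ∀ x ∈ QF i, ∀ y ∈ QF i, x * y ∈ QF i := by decide
lemma hqinv : ∀ i, ∀ x ∈ QF i, x⁻¹ ∈ QF i := by decide
lemma hqconj : ∀ i, ∀ x ∈ QF i, ∀ g, g * x * g⁻¹ ∈ QF i := by decide

lemma hd1 : ∀ i, (1 : D4) ∈ DF i := by decide
lemma hdmul : ∀ i, ∀ x ∈ DF i, ∀ y ∈ DF i, x * y ∈ DF i := by decide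
lemma hdinv : ∀ i, ∀ x ∈ DF i, x⁻¹ ∈ DF i := by decide
lemma hdconj : ∀ i, ∀ x ∈ DF i, ∀ g, g * x * g⁻¹ ∈ DF i := by decide

def qsub (i : Fin 6) : Subgroup Q8 := sg (QF i) (hq1 i) (hqmul i) (hqinv i)
def dsub (i : Fin 6) : Subgroup D4 := sg (DF i) (hd1 i) (hdmul i) (hdinv i)

lemma qnormal (i : Fin 6) : (qsub i).Normal := ⟨fun x hx g => hqconj i x hx g⟩
lemma dnormal (i : Fin 6) : (dsub i).Normal := ⟨fun x hx g => hdconj i x hx g⟩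

lemma QF_inj : Function.Injective QF := by decide
lemma DF_inj : Function.Injective DF := by decide

lemma qsub_eq_iff {i j : Fin 6} : qsub i = qsub j ↔ i = j := by
  constructor
  · intro h
    apply QF_inj
    ext x
    exact SetLike.ext_iff.mp h x
  · rintro rfl; rfl

lemma dsub_eq_iff {i j : Fin 6} : dsub i = dsub j ↔ i = j := by
  constructor
  · intro h
    apply DF_inj
    ext x
    exact SetLike.ext_iff.mp h x
  · rintro rfl; rfl

lemma q_classify_all : ∀ F : Finset Q8,
    ((1 : Q8) ∈ F ∧ (∀ x ∈ F, ∀ y ∈ F, x * y ∈ F) ∧ (∀ x ∈ F, x⁻¹ ∈ F)) →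
    F ∈ (List.finRange 6).map QF := by decide

lemma d_classify_normal : ∀ F : Finset D4,
    ((1 : D4) ∈ F ∧ (∀ x ∈ F, ∀ y ∈ F, x * y ∈ F) ∧ (∀ x ∈ F, x⁻¹ ∈ F)
      ∧ (∀ x ∈ F, ∀ g, g * x * g⁻¹ ∈ F)) →
    F ∈ (List.finRange 6).map DF := by decide

lemma qsub_surj (H : Subgroup Q8) : ∃ i, qsub i = H := by
  obtain ⟨F, hF, hmem⟩ := classify _ q_classify_all H
  rw [List.mem_map] at hF
  obtain ⟨i, -, rfl⟩ := hF
  exact ⟨i, SetLike.ext fun x => (mem_sg.trans (hmem x).symm)⟩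

lemma dsub_surj (H : Subgroup D4) (hN : H.Normal) : ∃ i, dsub i = H := by
  obtain ⟨F, hF, hmem⟩ := classifyNormal _ d_classify_normal H hN
  rw [List.mem_map] at hF
  obtain ⟨i, -, rfl⟩ := hF
  exact ⟨i, SetLike.ext fun x => (mem_sg.trans (hmem x).symm)⟩

lemma q_all_normal (H : Subgroup Q8) : H.Normal := by
  obtain ⟨i, rfl⟩ := qsub_surj H
  exact qnormal i

lemma rel_match : ∀ i j : Fin 6, (DF i ⊆ DF j ↔ QF i ⊆ QF j) := by decide

noncomputable def theOrderIso :
    {N : Subgroup Q8 // N.Normal} ≃o {N : Subgroup D4 // N.Normal} := by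
  classical
  have qbij : Function.Bijective (fun i : Fin 6 => (⟨qsub i, qnormal i⟩ :
      {N : Subgroup Q8 // N.Normal})) := by
    constructor
    · intro i j h
      exact qsub_eq_iff.mp (congrArg Subtype.val h)
    · rintro ⟨N, hN⟩
      obtain ⟨i, rfl⟩ := qsub_surj N
      exact ⟨i, rfl⟩
  have dbij : Function.Bijective (fun i : Fin 6 => (⟨dsub i, dnormal i⟩ :
      {N : Subgroup D4 // N.Normal})) := by
    constructor
    · intro i j h
      exact dsub_eq_iff.mp (congrArg Subtype.val h)
    · rintro ⟨N, hN⟩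
      obtain ⟨i, rfl⟩ := dsub_surj N hN
      exact ⟨i, rfl⟩
  refine ⟨(Equiv.ofBijective _ qbij).symm.trans (Equiv.ofBijective _ dbij), ?_⟩
  intro a b
  obtain ⟨i, rfl⟩ := qbij.2 a
  obtain ⟨j, rfl⟩ := qbij.2 b
  have ha : (Equiv.ofBijective _ qbij).symm
      ((fun i : Fin 6 => (⟨qsub i, qnormal i⟩ : {N : Subgroup Q8 // N.Normal})) i) = i :=
    (Equiv.ofBijective _ qbij).symm_apply_apply i
  have hb : (Equiv.ofBijective _ qbij).symm
      ((fun i : Fin 6 => (⟨qsub i, qnormal i⟩ : {N : Subgroup Q8 // N.Normal})) j) = j :=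
    (Equiv.ofBijective _ qbij).symm_apply_apply j
  simp only [Equiv.trans_apply, ha, hb, Equiv.ofBijective_apply]
  show (⟨dsub i, _⟩ : {N : Subgroup D4 // N.Normal}) ≤ ⟨dsub j, _⟩ ↔
    (⟨qsub i, _⟩ : {N : Subgroup Q8 // N.Normal}) ≤ ⟨qsub j, _⟩
  rw [Subtype.mk_le_mk, Subtype.mk_le_mk]
  show sg _ _ _ _ ≤ sg _ _ _ _ ↔ sg _ _ _ _ ≤ sg _ _ _ _
  rw [sg_le_sg_iff, sg_le_sg_iff]
  exact rel_match i j

/-- The non-normal subgroup `⟨sr 0⟩` of `D4`. -/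
def T : Subgroup D4 :=
  sg {r 0, sr 0} (by decide) (by decide) (by decide)

lemma mem_T {x : D4} : x ∈ T ↔ x ∈ ({r 0, sr 0} : Finset D4) := Iff.rfl

lemma T_not_normal : ¬ T.Normal := by
  intro h
  have h0 : (sr 0 : D4) ∈ T := mem_T.mpr (by decide)
  have h2 := h.conj_mem (sr 0) h0 (r 1)
  rw [mem_T] at h2
  revert h2
  decide

end Q8D4Aux

/-- The quaternion group `Q₈` and the dihedral group `D₄` of order 8 have isomorphic
lattices of normal subgroups, but they are not ℰL-isomorphic. -/
theorem q8_d4_normal_iso_not_eliso :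
    Nonempty ({N : Subgroup (QuaternionGroup 2) // N.Normal} ≃o
              {N : Subgroup (DihedralGroup 4) // N.Normal}) ∧
    ¬ ∃ f : Subgroup (QuaternionGroup 2) → Subgroup (DihedralGroup 4), IsELIso f := by
  constructor
  · exact ⟨Q8D4Aux.theOrderIso⟩
  · rintro ⟨f, ⟨hbij, hcore, -, -⟩⟩
    obtain ⟨H, hH⟩ := hbij.2 Q8D4Aux.T
    haveI : H.Normal := Q8D4Aux.q_all_normal H
    have h1 : H.normalCore = H := Subgroup.normalCore_eq_self H
    have h2 := hcore H
    rw [h1, hH] at h2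
    exact Q8D4Aux.T_not_normal (h2 ▸ Subgroup.normalCore_normal Q8D4Aux.T)
end

section
/- Let S₃ be the symmetric group of degree 3. Then the group Aut⁰_ℰ(L(S₃)) of all ℰL-automorphisms of S₃ that fix every normal subgroup of S₃, with composition as group operation, is isomorphic to S₃. -/
/-- `Aut⁰_ℰ(L(G))`: the group (under composition) of all ℰL-automorphisms of `G` that
fix every normal subgroup of `G`, as a subgroup of the symmetric group on `L(G)`. -/
def ELAut0 (G : Type*) [Group G] : Subgroup (Equiv.Perm (Subgroup G)) where
  carrier := {f : Equiv.Perm (Subgroup G) |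
    (∀ H : Subgroup G, f H.normalCore = (f H).normalCore) ∧
    (∀ H K : Subgroup G,
      f (H.normalCore ⊓ K.normalCore) = (f H).normalCore ⊓ (f K).normalCore) ∧
    (∀ H K : Subgroup G,
      f (H.normalCore ⊔ K.normalCore) = (f H).normalCore ⊔ (f K).normalCore) ∧
    (∀ N : Subgroup G, N.Normal → f N = N)}
  one_mem' := by simp
  mul_mem' := by
    rintro f g ⟨hf1, hf2, hf3, hf4⟩ ⟨hg1, hg2, hg3, hg4⟩
    refine ⟨fun H => ?_, fun H K => ?_, fun H K => ?_, fun N hN => ?_⟩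
    · simp [Equiv.Perm.mul_apply, hg1, hf1]
    · simp [Equiv.Perm.mul_apply, hg2, hf2]
    · simp [Equiv.Perm.mul_apply, hg3, hf3]
    · simp [Equiv.Perm.mul_apply, hg4 _ hN, hf4 _ hN]
  inv_mem' := by
    rintro f ⟨hf1, hf2, hf3, hf4⟩
    refine ⟨fun H => ?_, fun H K => ?_, fun H K => ?_, fun N hN => ?_⟩
    · apply f.injective; simp [hf1, Equiv.apply_symm_apply]
    · apply f.injective; simp [hf2, Equiv.apply_symm_apply]
    · apply f.injective; simp [hf3, Equiv.apply_symm_apply]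
    · apply f.injective; simp [hf4 _ hN, Equiv.apply_symm_apply]


open Subgroup

local notation "S3" => Equiv.Perm (Fin 3)

private lemma normal_of_index_two {G : Type*} [Group G] (H : Subgroup G)
    (h : H.index = 2) : H.Normal := by
  constructor
  intro n hn g
  rw [Subgroup.mul_mem_iff_of_index_two h, Subgroup.mul_mem_iff_of_index_two h]
  simp [hn, H.inv_mem_iff]

private lemma card_s3 : Nat.card S3 = 6 := by
  rw [Nat.card_eq_fintype_card]; decide

/-- Every non-normal subgroup of S₃ has order 2. -/
private lemma card_two_of_not_normal (H : Subgroup S3) (hH : ¬ H.Normal) :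
    Nat.card H = 2 := by
  have hd : Nat.card H ∣ 6 := card_s3 ▸ card_subgroup_dvd_card H
  have key : ∀ n : ℕ, n ∣ 6 → n = 1 ∨ n = 2 ∨ n = 3 ∨ n = 6 := by
    intro n hn
    have h6 : n ≤ 6 := Nat.le_of_dvd (by norm_num) hn
    interval_cases n <;> revert hn <;> decide
  rcases key _ hd with h | h | h | h
  · exfalso; apply hH
    rw [Subgroup.card_eq_one.1 h]; infer_instance
  · exact h
  · exfalso
    apply hH
    apply normal_of_index_two
    have := H.card_mul_index
    rw [card_s3, h] at this
    omega
  · exfalso; apply hH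
    have ht : H = ⊤ := Subgroup.eq_top_of_card_eq H (show Nat.card H = Nat.card S3 by rw [h, card_s3])
    rw [ht]; infer_instance

/-- Every non-normal subgroup of S₃ has trivial normal core. -/
private lemma core_eq_bot_of_not_normal (H : Subgroup S3) (hH : ¬ H.Normal) :
    H.normalCore = ⊥ := by
  have h2 : Nat.card H = 2 := card_two_of_not_normal H hH
  have hle : H.normalCore ≤ H := H.normalCore_le
  have hd : Nat.card H.normalCore ∣ 2 := h2 ▸ card_dvd_of_le hle
  rcases (Nat.dvd_prime Nat.prime_two).1 hd with h | h
  · exact Subgroup.card_eq_one.1 h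
  · exfalso
    apply hH
    have : H.normalCore = H := Subgroup.eq_of_le_of_card_ge hle (by omega)
    exact this ▸ H.normalCore_normal

/-- Membership in the cyclic group generated by an involution. -/
private lemma mem_zpowers_involution {G : Type*} [Group G] {g : G} (hg : g * g = 1)
    (x : G) : x ∈ Subgroup.zpowers g ↔ x = 1 ∨ x = g := by
  constructor
  · rintro ⟨n, rfl⟩
    have hsq : g ^ (2 : ℤ) = 1 := by
      rw [show (2:ℤ) = 1 + 1 by norm_num, zpow_add, zpow_one, hg]
    have hdecomp : g ^ n = g ^ (2 * (n / 2) + n % 2) := by rw [Int.mul_ediv_add_emod]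
    show g ^ n = 1 ∨ g ^ n = g
    rw [hdecomp, zpow_add, zpow_mul, hsq, one_zpow, one_mul]
    rcases Int.emod_two_eq n with h | h <;> rw [h] <;> simp
  · rintro (rfl | rfl)
    · exact Subgroup.one_mem _
    · exact Subgroup.mem_zpowers _

private lemma not_normal_zpowers_involution (g : S3) (h1 : g ≠ 1) (hg : g * g = 1) :
    ¬ (Subgroup.zpowers g).Normal := by
  have key : ∀ g : S3, g ≠ 1 → g * g = 1 → ∃ h : S3, h * g * h⁻¹ ≠ 1 ∧ h * g * h⁻¹ ≠ g := by
    decide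
  obtain ⟨h, hh1, hh2⟩ := key g h1 hg
  intro hN
  have := hN.conj_mem g (Subgroup.mem_zpowers g) h
  rcases (mem_zpowers_involution hg _).1 this with h' | h'
  · exact hh1 h'
  · exact hh2 h'

private lemma exists_involution_of_not_normal (H : Subgroup S3) (hH : ¬ H.Normal) :
    ∃ g : S3, g ≠ 1 ∧ g * g = 1 ∧ Subgroup.zpowers g = H := by
  have h2 : Nat.card H = 2 := card_two_of_not_normal H hH
  have hne : H ≠ ⊥ := by
    intro hb
    rw [← Subgroup.card_eq_one] at hb
    omega
  obtain ⟨g, hgH, hg1⟩ := (H.bot_or_exists_ne_one).resolve_left hne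
  have hsq : g * g = 1 := by
    have : (⟨g, hgH⟩ : H) ^ Nat.card H = 1 := pow_card_eq_one'
    rw [h2] at this
    have := congrArg (Subgroup.subtype H) this
    simpa [pow_two] using this
  refine ⟨g, hg1, hsq, ?_⟩
  have hle : Subgroup.zpowers g ≤ H := (Subgroup.zpowers_le).2 hgH
  have hcard : Nat.card (Subgroup.zpowers g) = 2 := by
    rw [Nat.card_zpowers]
    exact orderOf_eq_prime (by rw [pow_two]; exact hsq) hg1
  exact Subgroup.eq_of_le_of_card_ge hle (by omega)

private lemma card_involutions : Fintype.card {g : S3 // g ≠ 1 ∧ g * g = 1} = 3 := by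
  decide

/-- The non-normal subgroups of S₃ correspond to the involutions. -/
private noncomputable def nonNormalEquiv :
    {g : S3 // g ≠ 1 ∧ g * g = 1} ≃ {H : Subgroup S3 // ¬ H.Normal} := by
  refine Equiv.ofBijective
    (fun g => ⟨Subgroup.zpowers g.1, not_normal_zpowers_involution g.1 g.2.1 g.2.2⟩) ⟨?_, ?_⟩
  · rintro ⟨g, hg1, hg2⟩ ⟨g', hg'1, hg'2⟩ h
    simp only [Subtype.mk.injEq] at h ⊢
    have : g' ∈ Subgroup.zpowers g := h ▸ Subgroup.mem_zpowers g'
    rcases (mem_zpowers_involution hg2 _).1 this with h' | h'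
    · exact absurd h' hg'1
    · exact h'.symm
  · rintro ⟨H, hH⟩
    obtain ⟨g, hg1, hg2, hg3⟩ := exists_involution_of_not_normal H hH
    exact ⟨⟨g, hg1, hg2⟩, Subtype.ext hg3⟩

/-- `Equiv.permCongr` as a multiplicative equivalence. -/
private def permMulEquiv {α β : Type*} (e : α ≃ β) : Equiv.Perm α ≃* Equiv.Perm β :=
  { e.permCongr with
    map_mul' := fun p q => Equiv.ext fun b => by
      simp [Equiv.permCongr_apply, Equiv.Perm.mul_apply] }

private lemma elaut0_fix_normal (f : ELAut0 S3) :
    ∀ N : Subgroup S3, N.Normal → (f : Equiv.Perm (Subgroup S3)) N = N :=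
  f.2.2.2.2

private lemma elaut0_maps_nonnormal (f : ELAut0 S3) (H : Subgroup S3) (hH : ¬ H.Normal) :
    ¬ ((f : Equiv.Perm (Subgroup S3)) H).Normal := by
  intro hN
  have h4 := elaut0_fix_normal f⁻¹ ((f : Equiv.Perm (Subgroup S3)) H) hN
  have hcoe : ((f⁻¹ : ELAut0 S3) : Equiv.Perm (Subgroup S3)) =
      ((f : ELAut0 S3) : Equiv.Perm (Subgroup S3))⁻¹ := rfl
  rw [hcoe, Equiv.Perm.inv_def, Equiv.symm_apply_apply] at h4
  exact hH (h4 ▸ hN)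

private noncomputable def theta :
    ELAut0 S3 →* Equiv.Perm {H : Subgroup S3 // ¬ H.Normal} where
  toFun f :=
    { toFun := fun H => ⟨(f : Equiv.Perm (Subgroup S3)) H.1, elaut0_maps_nonnormal f H.1 H.2⟩
      invFun := fun H =>
        ⟨((f⁻¹ : ELAut0 S3) : Equiv.Perm (Subgroup S3)) H.1,
          elaut0_maps_nonnormal f⁻¹ H.1 H.2⟩
      left_inv := fun H => Subtype.ext (Equiv.symm_apply_apply _ _)
      right_inv := fun H => Subtype.ext (Equiv.apply_symm_apply _ _) }
  map_one' := Equiv.ext fun H => Subtype.ext rfl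
  map_mul' f g := Equiv.ext fun H => Subtype.ext rfl

private lemma theta_injective : Function.Injective theta := by
  intro f g h
  apply Subtype.ext
  apply Equiv.ext
  intro H
  by_cases hH : H.Normal
  · rw [elaut0_fix_normal f H hH, elaut0_fix_normal g H hH]
  · have := congrFun (congrArg (fun (p : Equiv.Perm {H : Subgroup S3 // ¬ H.Normal}) =>
      (p : {H : Subgroup S3 // ¬ H.Normal} → {H : Subgroup S3 // ¬ H.Normal})) h) ⟨H, hH⟩
    exact congrArg Subtype.val this

private lemma theta_surjective : Function.Surjective theta := by
  classical
  intro σ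
  set F : Equiv.Perm (Subgroup S3) :=
    Equiv.Perm.subtypeCongr (1 : Equiv.Perm {H : Subgroup S3 // H.Normal}) σ with hF
  have hfix : ∀ N : Subgroup S3, N.Normal → F N = N := by
    intro N hN
    rw [hF, Equiv.Perm.subtypeCongr.left_apply _ _ hN]
    rfl
  have hnn : ∀ (H : Subgroup S3) (hH : ¬ H.Normal), F H = (σ ⟨H, hH⟩).1 := by
    intro H hH
    rw [hF, Equiv.Perm.subtypeCongr.right_apply _ _ hH]
  have hcore : ∀ H : Subgroup S3, (F H).normalCore = H.normalCore := by
    intro H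
    by_cases hH : H.Normal
    · rw [hfix H hH]
    · rw [hnn H hH, core_eq_bot_of_not_normal _ (σ ⟨H, hH⟩).2,
        core_eq_bot_of_not_normal _ hH]
  have hmem : F ∈ ELAut0 S3 := by
    refine ⟨fun H => ?_, fun H K => ?_, fun H K => ?_, hfix⟩
    · rw [hcore, hfix _ H.normalCore_normal]
    · rw [hcore, hcore, hfix _ (Subgroup.normal_inf_normal _ _)]
    · rw [hcore, hcore, hfix _ (Subgroup.sup_normal _ _)]
  refine ⟨⟨F, hmem⟩, ?_⟩
  apply Equiv.ext
  intro H
  apply Subtype.ext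
  show F H.1 = (σ H).1
  rw [hnn H.1 H.2]

/-- Example 1 (2.2): for the symmetric group `S₃` of degree 3, the group
`Aut⁰_ℰ(L(S₃))` of ℰL-automorphisms of `S₃` fixing every normal subgroup is
isomorphic to `S₃`. -/
theorem elaut0_s3_iso_s3 :
    Nonempty (ELAut0 (Equiv.Perm (Fin 3)) ≃* Equiv.Perm (Fin 3)) := by
  have e3 : {H : Subgroup S3 // ¬ H.Normal} ≃ Fin 3 :=
    nonNormalEquiv.symm.trans (Fintype.equivFinOfCardEq card_involutions)
  exact ⟨(MulEquiv.ofBijective theta ⟨theta_injective, theta_surjective⟩).trans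
    (permMulEquiv e3)⟩
end
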